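/- For all α ≠ γ in {1,…,r}, the solutions of the quantum Q-system satisfy the commutation relation Q_{α,−1} · Q_{γ,1} = t^{2λ_{αγ}} · Q_{γ,1} · Q_{α,−1}. -/

import Mathlib

/-!
# Statement 5: the commutation relation `Q_{α,−1} Q_{γ,1} = t^{2λ_{αγ}} Q_{γ,1} Q_{α,−1}`

For all `α ≠ γ`, the solutions of the simply-laced quantum Q-system satisfy
`Q_{α,−1} Q_{γ,1} = t^{2λ_{αγ}} Q_{γ,1} Q_{α,−1}`.
-/

open scoped BigOperators

/-- The ordered product `∏_{β : C_{αβ} = −1} Q_{β,n}` (taken in increasing order of `β`;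
in any model the factors commute, so the order is immaterial). -/
def nbrProd {R : Type*} [Ring R] {r : ℕ} (C : Matrix (Fin r) (Fin r) ℤ)
    (Q : Fin r → ℤ → R) (α : Fin r) (n : ℤ) : R :=
  (((Finset.univ.filter (fun β => C α β = -1)).sort (· ≤ ·)).map (fun β => Q β n)).prod

/-- Auxiliary: commuting a list product past an element, collecting the `t`-powers. -/
lemma list_prod_comm {R : Type*} [Ring R] {ι : Type*} (t : Rˣ)
    (hc : ∀ (z : ℤ) (y : R), ((t ^ z : Rˣ) : R) * y = y * ((t ^ z : Rˣ) : R))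
    (f : ι → R) (g : ι → ℤ) (x : R)
    (h : ∀ β, f β * x = ((t ^ g β : Rˣ) : R) * (x * f β)) :
    ∀ L : List ι,
      (L.map f).prod * x = ((t ^ (L.map g).sum : Rˣ) : R) * (x * (L.map f).prod) := by
  intro L
  induction L with
  | nil => simp
  | cons a L ih =>
    simp only [List.map_cons, List.prod_cons, List.sum_cons]
    have hzadd : ((t ^ (g a + (L.map g).sum) : Rˣ) : R)
        = ((t ^ g a : Rˣ) : R) * ((t ^ (L.map g).sum : Rˣ) : R) := by
      rw [zpow_add]; push_cast; ring
    calc f a * (L.map f).prod * x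
        = f a * ((L.map f).prod * x) := by rw [mul_assoc]
      _ = f a * (((t ^ (L.map g).sum : Rˣ) : R) * (x * (L.map f).prod)) := by rw [ih]
      _ = ((t ^ (L.map g).sum : Rˣ) : R) * (f a * (x * (L.map f).prod)) := by
          rw [← mul_assoc, ← hc, mul_assoc]
      _ = ((t ^ (L.map g).sum : Rˣ) : R) * ((f a * x) * (L.map f).prod) := by
          rw [← mul_assoc (f a)]
      _ = ((t ^ (L.map g).sum : Rˣ) : R) *
            ((((t ^ g a : Rˣ) : R) * (x * f a)) * (L.map f).prod) := by rw [h a]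
      _ = ((t ^ (g a + (L.map g).sum) : Rˣ) : R) * (x * (f a * (L.map f).prod)) := by
          rw [hzadd, ← mul_assoc, ← hc (L.map g).sum, mul_assoc, mul_assoc, mul_assoc,
            mul_assoc]

theorem quantum_Qsystem_minus_one_commutation
    {R : Type*} [Ring R] (r : ℕ) (C : Matrix (Fin r) (Fin r) ℤ)
    -- `C` is the Cartan matrix of a simply-laced simple Lie algebra:
    (hsym : C.IsSymm)
    (hdiag : ∀ α, C α α = 2)
    (hoff : ∀ α β, α ≠ β → C α β = 0 ∨ C α β = -1)
    (hpos : ∀ v : Fin r → ℤ, v ≠ 0 → 0 < ∑ α, ∑ β, v α * C α β * v β)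
    (hconn : ∀ α β : Fin r, Relation.ReflTransGen (fun a b => C a b = -1) α β)
    -- `t` is a central unit of `R`:
    (t : Rˣ) (hcentral : ∀ x : R, (t : R) * x = x * (t : R))
    -- the `Q_{α,n}` are invertible elements of `R`:
    (Q : Fin r → ℤ → R) (hunit : ∀ α n, IsUnit (Q α n))
    -- satisfying the quantum Q-system (`λ = δ C⁻¹ = adjugate C`):
    (hsys : ∀ α (n : ℤ),
      ((t ^ C.adjugate α α : Rˣ) : R) * (Q α (n + 1) * Q α (n - 1)) =
        Q α n ^ 2 - nbrProd C Q α n)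
    -- and the initial commutation relations for `m, n ∈ {0,1}`:
    (hcomm : ∀ α β : Fin r, ∀ m n : ℤ, (m = 0 ∨ m = 1) → (n = 0 ∨ n = 1) →
      Q α n * Q β m = ((t ^ (C.adjugate α β * (m - n)) : Rˣ) : R) * (Q β m * Q α n)) :
    ∀ α γ : Fin r, α ≠ γ →
      Q α (-1) * Q γ 1 =
        ((t ^ (2 * C.adjugate α γ) : Rˣ) : R) * (Q γ 1 * Q α (-1)) := by
  intro α γ hαγ
  -- centrality of integer powers of `t`
  have hc : ∀ (z : ℤ) (y : R), ((t ^ z : Rˣ) : R) * y = y * ((t ^ z : Rˣ) : R) := by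
    intro z y
    have : Commute (t : R) y := hcentral y
    exact (this.units_zpow_left z).eq
  -- symmetry of the adjugate
  have hadj : ∀ i j, C.adjugate i j = C.adjugate j i := by
    intro i j
    have h1 : (C.transpose).adjugate = C.adjugate := by rw [hsym.eq]
    have h2 : (C.adjugate).transpose = (C.transpose).adjugate := Matrix.adjugate_transpose C
    have := congrArg (fun M => M i j) (h2.trans h1)
    simpa [Matrix.transpose_apply] using this.symm
  set s : Finset (Fin r) := Finset.univ.filter (fun β => C α β = -1) with hs
  -- the key sum identity: ∑_{β ∈ s} λ_{γβ} = 2 λ_{γα}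
  have hsum : (∑ β ∈ s, C.adjugate γ β) = 2 * C.adjugate γ α := by
    have h0 : (∑ β, C.adjugate γ β * C β α) = 0 := by
      have := congrArg (fun M => M γ α) (Matrix.adjugate_mul C)
      simpa [Matrix.mul_apply, Matrix.one_apply, hαγ.symm] using this
    have hsplit := Finset.sum_filter_add_sum_filter_not Finset.univ
      (fun β => C α β = -1) (fun β => C.adjugate γ β * C β α)
    have hCsym : ∀ β, C β α = C α β := by
      intro β
      have := congrArg (fun M => M β α) hsym.eq
      simpa [Matrix.transpose_apply] using this.symm
    have h1 : (∑ β ∈ s, C.adjugate γ β * C β α) = -(∑ β ∈ s, C.adjugate γ β) := by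
      rw [← Finset.sum_neg_distrib]
      apply Finset.sum_congr rfl
      intro β hβ
      have : C α β = -1 := (Finset.mem_filter.mp hβ).2
      rw [hCsym β, this]; ring
    have h2 : (∑ β ∈ Finset.univ.filter (fun β => ¬ C α β = -1),
        C.adjugate γ β * C β α) = 2 * C.adjugate γ α := by
      rw [Finset.sum_eq_single α]
      · rw [hCsym α, hdiag α]; ring
      · intro b hb hbα
        have hb' : ¬ C α b = -1 := (Finset.mem_filter.mp hb).2
        have : C α b = 0 := by
          rcases hoff α b (Ne.symm hbα) with h | h
          · exact h
          · exact absurd h hb'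
        rw [hCsym b, this, mul_zero]
      · intro hα
        exfalso
        apply hα
        rw [Finset.mem_filter]
        refine ⟨Finset.mem_univ α, ?_⟩
        rw [hdiag α]
        norm_num
    rw [← hsplit, h1, h2] at h0
    linarith
  -- commutation of the neighbour product with Q γ 1
  have hP : nbrProd C Q α 0 * Q γ 1 =
      ((t ^ (2 * C.adjugate α γ) : Rˣ) : R) * (Q γ 1 * nbrProd C Q α 0) := by
    have hlist := list_prod_comm t hc (fun β => Q β 0) (fun β => C.adjugate β γ)
      (Q γ 1) (fun β => by
        have := hcomm β γ 1 0 (Or.inr rfl) (Or.inl rfl)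
        simpa using this) (s.sort (· ≤ ·))
    have hsum' : ((s.sort (· ≤ ·)).map (fun β => C.adjugate β γ)).sum
        = 2 * C.adjugate α γ := by
      have hperm : List.Perm ((s.sort (· ≤ ·)).map (fun β => C.adjugate β γ))
          (s.toList.map (fun β => C.adjugate β γ)) :=
        (Finset.sort_perm_toList s (· ≤ ·)).map _
      rw [hperm.sum_eq]
      have : (s.toList.map (fun β => C.adjugate β γ)).sum = ∑ β ∈ s, C.adjugate β γ :=
        Finset.sum_map_toList s _
      rw [this]
      calc (∑ β ∈ s, C.adjugate β γ) = ∑ β ∈ s, C.adjugate γ β := by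
            exact Finset.sum_congr rfl (fun β _ => hadj β γ)
        _ = 2 * C.adjugate γ α := hsum
        _ = 2 * C.adjugate α γ := by rw [hadj γ α]
    rw [hsum'] at hlist
    simpa [nbrProd, hs] using hlist
  -- commutation of Q α 0 ^ 2 with Q γ 1
  have h2' : Q α 0 * Q γ 1 = ((t ^ C.adjugate α γ : Rˣ) : R) * (Q γ 1 * Q α 0) := by
    have := hcomm α γ 1 0 (Or.inr rfl) (Or.inl rfl)
    simpa using this
  have hzadd2 : ((t ^ (2 * C.adjugate α γ) : Rˣ) : R)
      = ((t ^ C.adjugate α γ : Rˣ) : R) * ((t ^ C.adjugate α γ : Rˣ) : R) := by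
    rw [two_mul, zpow_add]; push_cast; ring
  have hsq : Q α 0 ^ 2 * Q γ 1 =
      ((t ^ (2 * C.adjugate α γ) : Rˣ) : R) * (Q γ 1 * Q α 0 ^ 2) := by
    have e1 : Q α 0 ^ 2 * Q γ 1 = Q α 0 * (Q α 0 * Q γ 1) := by
      rw [sq, mul_assoc]
    calc Q α 0 ^ 2 * Q γ 1
        = Q α 0 * (((t ^ C.adjugate α γ : Rˣ) : R) * (Q γ 1 * Q α 0)) := by
          rw [e1, h2']
      _ = ((t ^ C.adjugate α γ : Rˣ) : R) * ((Q α 0 * Q γ 1) * Q α 0) := by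
          rw [← mul_assoc, ← hc, mul_assoc, mul_assoc]
      _ = ((t ^ C.adjugate α γ : Rˣ) : R) *
            ((((t ^ C.adjugate α γ : Rˣ) : R) * (Q γ 1 * Q α 0)) * Q α 0) := by
          rw [h2']
      _ = ((t ^ (2 * C.adjugate α γ) : Rˣ) : R) * (Q γ 1 * Q α 0 ^ 2) := by
          rw [hzadd2, sq, mul_assoc, mul_assoc, mul_assoc]
  -- commutation of Q α 1 with Q γ 1
  have h11 : Q α 1 * Q γ 1 = Q γ 1 * Q α 1 := by
    have := hcomm α γ 1 1 (Or.inr rfl) (Or.inr rfl)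
    simpa using this
  -- the Q-system relation at n = 0
  have hQS := hsys α 0
  norm_num at hQS
  -- multiply the relation on the right by Q γ 1 and simplify
  have key : ((t ^ C.adjugate α α : Rˣ) : R) * (Q α 1 * (Q α (-1) * Q γ 1)) =
      ((t ^ C.adjugate α α : Rˣ) : R) *
        (Q α 1 * (((t ^ (2 * C.adjugate α γ) : Rˣ) : R) * (Q γ 1 * Q α (-1)))) := by
    have lhs_eq : ((t ^ C.adjugate α α : Rˣ) : R) * (Q α 1 * (Q α (-1) * Q γ 1))
        = (Q α 0 ^ 2 - nbrProd C Q α 0) * Q γ 1 := by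
      rw [← hQS, mul_assoc, mul_assoc]
    have rhs_eq : (Q α 0 ^ 2 - nbrProd C Q α 0) * Q γ 1 =
        ((t ^ (2 * C.adjugate α γ) : Rˣ) : R) *
          (Q γ 1 * (Q α 0 ^ 2 - nbrProd C Q α 0)) := by
      rw [sub_mul, hsq, hP, mul_sub, mul_sub]
    rw [lhs_eq, rhs_eq, ← hQS]
    calc ((t ^ (2 * C.adjugate α γ) : Rˣ) : R) *
          (Q γ 1 * (((t ^ C.adjugate α α : Rˣ) : R) * (Q α 1 * Q α (-1))))
        = ((t ^ (2 * C.adjugate α γ) : Rˣ) : R) *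
            (((t ^ C.adjugate α α : Rˣ) : R) * (Q γ 1 * (Q α 1 * Q α (-1)))) := by
          rw [← mul_assoc (Q γ 1), ← hc (C.adjugate α α), mul_assoc]
      _ = ((t ^ C.adjugate α α : Rˣ) : R) *
            (((t ^ (2 * C.adjugate α γ) : Rˣ) : R) * ((Q γ 1 * Q α 1) * Q α (-1))) := by
          rw [← mul_assoc, hc (2 * C.adjugate α γ), mul_assoc, ← mul_assoc (Q γ 1)]
      _ = ((t ^ C.adjugate α α : Rˣ) : R) *
            (((t ^ (2 * C.adjugate α γ) : Rˣ) : R) * (Q α 1 * (Q γ 1 * Q α (-1)))) := by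
          rw [← h11, mul_assoc (Q α 1)]
      _ = ((t ^ C.adjugate α α : Rˣ) : R) *
            (Q α 1 * (((t ^ (2 * C.adjugate α γ) : Rˣ) : R) * (Q γ 1 * Q α (-1)))) := by
          rw [← mul_assoc ((t ^ (2 * C.adjugate α γ) : Rˣ) : R),
            hc (2 * C.adjugate α γ) (Q α 1), mul_assoc]
  have key2 := (t ^ C.adjugate α α).isUnit.mul_left_cancel key
  exact (hunit α 1).mul_left_cancel key2
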